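/- Let R > 0, σ > 0, and let c₁ be the smallest positive zero of the function φ(x) = x·tan(x) − Rσ. Then c₁ ∈ (0, π/2) and c₁² > π²Rσ/(π² + 4Rσ). -/

import Mathlib

open Real Set Filter Topology

noncomputable def bsG (x : ℝ) : ℝ := π^2 * x * Real.cos x - (π^2 - 4*x^2) * Real.sin x
noncomputable def bsH (x : ℝ) : ℝ := (8 - π^2) * Real.sin x + 4 * x * Real.cos x
noncomputable def bsH2 (x : ℝ) : ℝ := (12 - π^2) * Real.cos x - 4 * x * Real.sin x

lemma hasDerivAt_bsG (x : ℝ) : HasDerivAt bsG (x * bsH x) x := by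
  have h1 : HasDerivAt (fun x : ℝ => π^2 * x * Real.cos x)
      (π^2 * Real.cos x + π^2 * x * (-Real.sin x)) x := by
    have := (((hasDerivAt_id x).const_mul (π^2)).mul (Real.hasDerivAt_cos x))
    exact this.congr_deriv (by simp only [id_eq]; ring)
  have h2 : HasDerivAt (fun x : ℝ => (π^2 - 4*x^2) * Real.sin x)
      ((-(8*x)) * Real.sin x + (π^2 - 4*x^2) * Real.cos x) x := by
    have hp : HasDerivAt (fun x : ℝ => π^2 - 4*x^2) (-(8*x)) x := by
      have := ((hasDerivAt_pow 2 x).const_mul (4:ℝ)).const_sub (π^2)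
      exact this.congr_deriv (by norm_num <;> ring)
    exact hp.mul (Real.hasDerivAt_sin x)
  have := h1.sub h2
  exact this.congr_deriv (by unfold bsH; ring)

lemma hasDerivAt_bsH (x : ℝ) : HasDerivAt bsH (bsH2 x) x := by
  have h1 : HasDerivAt (fun x : ℝ => (8 - π^2) * Real.sin x)
      ((8 - π^2) * Real.cos x) x := (Real.hasDerivAt_sin x).const_mul _
  have h2 : HasDerivAt (fun x : ℝ => 4 * x * Real.cos x)
      (4 * Real.cos x + 4 * x * (-Real.sin x)) x := by
    have := (((hasDerivAt_id x).const_mul (4:ℝ)).mul (Real.hasDerivAt_cos x))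
    exact this.congr_deriv (by simp only [id_eq]; ring)
  have := h1.add h2
  exact this.congr_deriv (by unfold bsH2; ring)

lemma hasDerivAt_bsH2 (x : ℝ) : HasDerivAt bsH2 ((π^2 - 16) * Real.sin x - 4 * x * Real.cos x) x := by
  have h1 : HasDerivAt (fun x : ℝ => (12 - π^2) * Real.cos x)
      ((12 - π^2) * (-Real.sin x)) x := (Real.hasDerivAt_cos x).const_mul _
  have h2 : HasDerivAt (fun x : ℝ => 4 * x * Real.sin x)
      (4 * Real.sin x + 4 * x * Real.cos x) x := by
    have := (((hasDerivAt_id x).const_mul (4:ℝ)).mul (Real.hasDerivAt_sin x))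
    exact this.congr_deriv (by simp only [id_eq]; ring)
  have := h1.sub h2
  exact this.congr_deriv (by ring)

lemma bsH2_strictAnti : StrictAntiOn bsH2 (Icc 0 (π/2)) := by
  apply strictAntiOn_of_deriv_neg (convex_Icc _ _)
  · exact fun x _ => (hasDerivAt_bsH2 x).continuousAt.continuousWithinAt
  · intro x hx
    rw [interior_Icc] at hx
    rw [(hasDerivAt_bsH2 x).deriv]
    have hs : 0 < Real.sin x := Real.sin_pos_of_pos_of_lt_pi hx.1 (by linarith [Real.pi_pos, hx.2])
    have hcos : 0 < Real.cos x := Real.cos_pos_of_mem_Ioo ⟨by linarith [Real.pi_pos, hx.1], hx.2⟩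
    have h16 : π^2 < 16 := by nlinarith [Real.pi_lt_d2, Real.pi_pos]
    nlinarith [mul_pos hx.1 hcos, mul_pos (sub_pos.2 h16) hs]

lemma bsG_pos {x : ℝ} (hx : x ∈ Ioo 0 (π/2)) : 0 < bsG x := by
  have hG0 : bsG 0 = 0 := by simp [bsG]
  have hGpi : bsG (π/2) = 0 := by
    simp [bsG, Real.cos_pi_div_two, Real.sin_pi_div_two]
    ring
  by_cases H : ∀ t ∈ Ioo 0 x, 0 < bsH t
  · have mono : StrictMonoOn bsG (Icc 0 x) := by
      apply strictMonoOn_of_deriv_pos (convex_Icc _ _)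
      · exact fun t _ => (hasDerivAt_bsG t).continuousAt.continuousWithinAt
      · intro t ht
        rw [interior_Icc] at ht
        rw [(hasDerivAt_bsG t).deriv]
        exact mul_pos ht.1 (H t ht)
    have := mono (left_mem_Icc.2 hx.1.le) ⟨hx.1.le, le_refl x⟩ hx.1
    rwa [hG0] at this
  · push_neg at H
    obtain ⟨y, hy, hhy⟩ := H
    -- MVT to find ξ with bsH2 ξ ≤ 0
    obtain ⟨ξ, hξ, hξ2⟩ := exists_hasDerivAt_eq_slope bsH bsH2 hy.1
      (fun t _ => (hasDerivAt_bsH t).continuousAt.continuousWithinAt)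
      (fun t _ => hasDerivAt_bsH t)
    have hH0 : bsH 0 = 0 := by simp [bsH]
    have hξneg : bsH2 ξ ≤ 0 := by
      rw [hξ2, hH0]
      apply div_nonpos_of_nonpos_of_nonneg <;> simp [hhy, hy.1.le]
    have hξI : ξ ∈ Icc 0 (π/2) := ⟨hξ.1.le, by linarith [hξ.2, hy.2, hx.2]⟩
    -- bsH strictly decreasing on [ξ, π/2]
    have hHanti : StrictAntiOn bsH (Icc ξ (π/2)) := by
      apply strictAntiOn_of_deriv_neg (convex_Icc _ _)
      · exact fun t _ => (hasDerivAt_bsH t).continuousAt.continuousWithinAt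
      · intro t ht
        rw [interior_Icc] at ht
        rw [(hasDerivAt_bsH t).deriv]
        have : bsH2 t < bsH2 ξ := bsH2_strictAnti hξI ⟨by linarith [hξI.1, ht.1], ht.2.le⟩ ht.1
        linarith
    -- bsG strictly decreasing on [y, π/2]
    have hyI : y ∈ Icc ξ (π/2) := ⟨hξ.2.le, by linarith [hy.2, hx.2]⟩
    have hGanti : StrictAntiOn bsG (Icc y (π/2)) := by
      apply strictAntiOn_of_deriv_neg (convex_Icc _ _)
      · exact fun t _ => (hasDerivAt_bsG t).continuousAt.continuousWithinAt
      · intro t ht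
        rw [interior_Icc] at ht
        rw [(hasDerivAt_bsG t).deriv]
        have htI : t ∈ Icc ξ (π/2) := ⟨by linarith [hξ.2, ht.1], ht.2.le⟩
        have hHt : bsH t < bsH y := hHanti hyI htI ht.1
        have : bsH t < 0 := lt_of_lt_of_le hHt hhy
        have ht0 : 0 < t := lt_trans hy.1 ht.1
        nlinarith
    have := hGanti ⟨hy.2.le, hx.2.le⟩ (right_mem_Icc.2 (by linarith [hy.2, hx.2])) hx.2
    rwa [hGpi] at this

/-- Becker–Stark inequality. -/
lemma becker_stark {x : ℝ} (hx : x ∈ Ioo 0 (π/2)) :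
    Real.tan x * (π^2 - 4*x^2) < π^2 * x := by
  have hcos : 0 < Real.cos x := Real.cos_pos_of_mem_Ioo ⟨by linarith [Real.pi_pos, hx.1], hx.2⟩
  have hg := bsG_pos hx
  rw [Real.tan_eq_sin_div_cos, div_mul_eq_mul_div, div_lt_iff₀ hcos]
  unfold bsG at hg
  nlinarith

/-- Let R > 0, σ > 0, and let c₁ be the smallest positive zero of
φ(x) = x·tan x − Rσ. Then c₁ ∈ (0, π/2) and c₁² > π²Rσ/(π² + 4Rσ). -/
theorem stmt0 (R σ c₁ : ℝ) (hR : 0 < R) (hσ : 0 < σ)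
    (hc : IsLeast {x : ℝ | 0 < x ∧ x * Real.tan x - R * σ = 0} c₁) :
    c₁ ∈ Set.Ioo 0 (Real.pi / 2) ∧
      c₁ ^ 2 > Real.pi ^ 2 * R * σ / (Real.pi ^ 2 + 4 * R * σ) := by
  obtain ⟨⟨hc₁pos, hc₁eq⟩, hmin⟩ := hc
  have hRσ : 0 < R * σ := mul_pos hR hσ
  have hπ := Real.pi_pos
  -- find b ∈ (π/4, π/2) with large tan
  have h1 : ∀ᶠ x in 𝓝[<] (π/2), 4*R*σ/π < Real.tan x :=
    Real.tendsto_tan_pi_div_two.eventually_gt_atTop _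
  have h2 : ∀ᶠ x in 𝓝[<] (π/2), x ∈ Ioo (π/4) (π/2) :=
    Ioo_mem_nhdsLT_of_mem ⟨by linarith, le_refl _⟩
  obtain ⟨b, hbt, hbI⟩ := (h1.and h2).exists
  have hbtan : R * σ < b * Real.tan b := by
    have h4 : 0 < 4*R*σ/π := by positivity
    calc R * σ = (π/4) * (4*R*σ/π) := by field_simp
    _ < b * Real.tan b := by
        apply mul_lt_mul' hbI.1.le hbt h4.le (by linarith [hbI.1])
  -- IVT on [0, b]
  have hcont : ContinuousOn (fun x : ℝ => x * Real.tan x) (Icc 0 b) := by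
    apply continuousOn_id.mul
    intro t ht
    have hcos : 0 < Real.cos t := Real.cos_pos_of_mem_Ioo
      ⟨by linarith [ht.1], lt_of_le_of_lt ht.2 hbI.2⟩
    exact (Real.continuousAt_tan.2 hcos.ne').continuousWithinAt
  have hb0 : (0:ℝ) ≤ b := by linarith [hbI.1]
  have hsub := intermediate_value_Ioo hb0 hcont
  have hmem : R * σ ∈ Ioo ((fun x : ℝ => x * Real.tan x) 0) ((fun x : ℝ => x * Real.tan x) b) := by
    simp only
    constructor
    · simpa using hRσ
    · exact hbtan
  obtain ⟨z, hz, hfz⟩ := hsub hmem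
  have hzS : c₁ ≤ z := hmin ⟨hz.1, by simp only at hfz; rw [hfz]; ring⟩
  have hc₁lt : c₁ < π/2 := lt_of_le_of_lt (hzS.trans hz.2.le) hbI.2
  have hc₁I : c₁ ∈ Set.Ioo 0 (π/2) := ⟨hc₁pos, hc₁lt⟩
  refine ⟨hc₁I, ?_⟩
  have htan : c₁ * Real.tan c₁ = R * σ := by linarith [hc₁eq]
  have bs := becker_stark hc₁I
  have key : R * σ * (π^2 - 4*c₁^2) < π^2 * c₁^2 := by nlinarith
  rw [gt_iff_lt, div_lt_iff₀ (by positivity)]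
  nlinarith
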